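/- Single-insertion shuffle lemma for the saillance code: let β ∈ S_n and let 1⧢_i β be the permutation obtained by shifting β up by 1 and inserting the letter 1 at position i+1. Then the first component of the saillance code of 1⧢_i β equals τ_S(β)(i), where τ_S(β)(0) = 0 and τ_S(β)(i) = n + 1 − β(i) for 1 ≤ i ≤ n; moreover the remaining components of the saillance code of 1⧢_i β equal the saillance code of β. -/

import Mathlib

open Finset

namespace Paper

/-- The word of `σ` at 0-based position `i`, with 0-based values (`0` outside range). -/
def wrd {n : ℕ} (σ : Equiv.Perm (Fin n)) (i : ℕ) : ℕ :=
  if h : i < n then (σ ⟨i, h⟩ : ℕ) else 0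

/-- The descent set of `σ`, in 1-based positions: `{ i ∈ {1,…,n-1} | σ(i) > σ(i+1) }`. -/
def Des {n : ℕ} (σ : Equiv.Perm (Fin n)) : Finset ℕ :=
  (Finset.Ioo 0 n).filter fun i => wrd σ i < wrd σ (i - 1)

/-- The major index: the sum of the (1-based) descent positions. -/
def maj {n : ℕ} (σ : Equiv.Perm (Fin n)) : ℕ := ∑ i ∈ Des σ, i

/-- The number of descents. -/
def des {n : ℕ} (σ : Equiv.Perm (Fin n)) : ℕ := (Des σ).card

/-- The number of inversions. -/
def inv {n : ℕ} (σ : Equiv.Perm (Fin n)) : ℕ :=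
  (Finset.univ.filter fun p : Fin n × Fin n => p.1 < p.2 ∧ σ p.2 < σ p.1).card

/-- The Lehmer code, as a function `ℕ → ℕ` (0-based index, zero outside `[0, n)`):
`Lc σ i = #{ j > i | σ(j) < σ(i) }`. -/
def Lc {n : ℕ} (σ : Equiv.Perm (Fin n)) (i : ℕ) : ℕ :=
  if h : i < n then (Finset.univ.filter fun j : Fin n => i < (j : ℕ) ∧ σ j < σ ⟨i, h⟩).card
  else 0

/-- The inversion code (invcode) is the Lehmer code of the inverse. -/
def Ic {n : ℕ} (σ : Equiv.Perm (Fin n)) : ℕ → ℕ := Lc σ⁻¹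

/-- The word of a permutation, with 1-based values. -/
def word {n : ℕ} (σ : Equiv.Perm (Fin n)) : List ℕ := List.ofFn fun i => (σ i : ℕ) + 1

/-- The major index of a word: the sum of the 1-based positions `t` with `w_t > w_{t+1}`. -/
def majL (l : List ℕ) : ℕ :=
  ∑ t ∈ Finset.range (l.length - 1), if l.getD (t + 1) 0 < l.getD t 0 then t + 1 else 0

/-- The major code, as a function `ℕ → ℕ` (0-based index `i`, i.e. paper's `m_{i+1}`):
`m_i = maj(σ^{(i)}) - maj(σ^{(i+1)})` where `σ^{(i)}` keeps only the letters `≥ i`. -/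
def Mc {n : ℕ} (σ : Equiv.Perm (Fin n)) (i : ℕ) : ℕ :=
  majL ((word σ).filter fun x => decide (i + 1 ≤ x)) -
    majL ((word σ).filter fun x => decide (i + 2 ≤ x))

/-- The saillance code, as a function `ℕ → ℕ` (0-based index `i`, i.e. about the letter of
0-based value `i`): the number of letters of `σ` that are `≥` the rightmost letter located to
the left of `i` and greater than `i` (0 if there is no such letter). -/
def Sc {n : ℕ} (σ : Equiv.Perm (Fin n)) (i : ℕ) : ℕ :=
  if h : i < n then
    let L := Finset.univ.filter fun j : Fin n => j < σ⁻¹ ⟨i, h⟩ ∧ (⟨i, h⟩ : Fin n) < σ j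
    if hL : L.Nonempty then n - (σ (L.max' hL) : ℕ) else 0
  else 0

/-- Sub-diagonal sequences, as functions `ℕ → ℕ` supported on `[0, n)` with
`c_i ≤ n - 1 - i` there (0-based; i.e. `0 ≤ c_i ≤ n - i` in 1-based indexing). -/
def SubDiag (n : ℕ) : Set (ℕ → ℕ) :=
  {c | (∀ i, i < n → c i + i < n) ∧ ∀ i, n ≤ i → c i = 0}

/-- The permutation `τ_M(β)` of `{0,…,n}`: `τ_M(β)(i) = des(β) - j` if `i` is the `j`-th
descent of `β`, and `τ_M(β)(i) = des(β) + j - 1` if `i` is the `j`-th rise (position `0`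
counting as a rise). -/
def tauM {n : ℕ} (β : Equiv.Perm (Fin n)) (i : ℕ) : ℕ :=
  if i ∈ Des β then des β - ((Des β).filter fun d => d ≤ i).card
  else des β + ((Finset.range (i + 1)).filter fun r => r ∉ Des β).card - 1

/-- The permutation `τ_S(β)` of `{0,…,n}`: `τ_S(β)(0) = 0` and `τ_S(β)(i) = n + 1 - β(i)`
(1-based values) for `1 ≤ i ≤ n`. -/
def tauS {n : ℕ} (β : Equiv.Perm (Fin n)) (i : ℕ) : ℕ :=
  if h : 1 ≤ i ∧ i ≤ n then n - (β ⟨i - 1, by omega⟩ : ℕ) else 0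

/-- The complete homogeneous symmetric polynomial `h_k(X_m)` in the variables
`x_0, …, x_m`. -/
noncomputable def hpoly (k m : ℕ) : MvPolynomial ℕ ℤ :=
  ∑ f ∈ Finset.univ.filter (fun f : Fin k → Fin (m + 1) => ∀ a b : Fin k, a ≤ b → f a ≤ f b),
    ∏ t : Fin k, MvPolynomial.X ((f t : ℕ))

/-- The (proper) descent set of a composition `I = (i_1,…,i_r)`:
`{i_1, i_1+i_2, …, i_1+⋯+i_{r-1}}`. -/
def DesComp (I : List ℕ) : Finset ℕ :=
  (Finset.range (I.length - 1)).image fun k => (I.take (k + 1)).sum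

end Paper


private lemma Sc_pos' {n : ℕ} (σ : Equiv.Perm (Fin n)) (i : ℕ) (h : i < n) :
    Paper.Sc σ i = if hL : (Finset.univ.filter fun j : Fin n =>
        j < σ⁻¹ ⟨i, h⟩ ∧ (⟨i, h⟩ : Fin n) < σ j).Nonempty
      then n - (σ ((Finset.univ.filter fun j : Fin n =>
        j < σ⁻¹ ⟨i, h⟩ ∧ (⟨i, h⟩ : Fin n) < σ j).max' hL) : ℕ) else 0 := by
  unfold Paper.Sc
  rw [dif_pos h]

private lemma Sc_neg' {n : ℕ} (σ : Equiv.Perm (Fin n)) (i : ℕ) (h : ¬ i < n) :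
    Paper.Sc σ i = 0 := by
  unfold Paper.Sc
  rw [dif_neg h]


private def shiftIns (n i : ℕ) (j : Fin n) : Fin (n + 1) :=
  if (j : ℕ) < i then ⟨(j : ℕ), Nat.lt_succ_of_lt j.isLt⟩
  else ⟨(j : ℕ) + 1, Nat.succ_lt_succ j.isLt⟩

private lemma shiftIns_strictMono (n i : ℕ) : StrictMono (shiftIns n i) := by
  intro a b hab
  have hab' : (a : ℕ) < (b : ℕ) := hab
  unfold shiftIns
  by_cases h1 : (a : ℕ) < i <;> by_cases h2 : (b : ℕ) < i <;>
    simp only [h1, h2, if_true, if_false, if_pos, if_neg, Fin.mk_lt_mk, not_false_iff] <;>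
    omega

/-- Single-insertion shuffle lemma for the saillance code: if `βi = 1⧢_i β`, then the first
component of `Sc(βi)` is `τ_S(β)(i)` and the remaining components are `Sc(β)`. -/
theorem scode_single_insertion (n : ℕ) (β : Equiv.Perm (Fin n)) (i : ℕ) (hi : i ≤ n)
    (βi : Equiv.Perm (Fin (n + 1)))
    (hlt : ∀ (j : Fin (n + 1)) (hj : (j : ℕ) < i),
      (βi j : ℕ) = (β ⟨(j : ℕ), by omega⟩ : ℕ) + 1)
    (heq : ∀ j : Fin (n + 1), (j : ℕ) = i → (βi j : ℕ) = 0)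
    (hgt : ∀ (j : Fin (n + 1)) (hj : i < (j : ℕ)),
      (βi j : ℕ) = (β ⟨(j : ℕ) - 1, by have := j.isLt; omega⟩ : ℕ) + 1) :
    Paper.Sc βi 0 = Paper.tauS β i ∧ ∀ t : ℕ, Paper.Sc βi (t + 1) = Paper.Sc β t := by
  set e := shiftIns n i with he_def
  have hmono : StrictMono e := shiftIns_strictMono n i
  have he : ∀ j : Fin n, (βi (e j) : ℕ) = (β j : ℕ) + 1 := by
    intro j
    by_cases h : (j : ℕ) < i
    · have hej : e j = ⟨(j : ℕ), Nat.lt_succ_of_lt j.isLt⟩ := by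
        rw [he_def]; unfold shiftIns; rw [if_pos h]
      rw [hej, hlt ⟨(j : ℕ), Nat.lt_succ_of_lt j.isLt⟩ h]
    · have hej : e j = ⟨(j : ℕ) + 1, Nat.succ_lt_succ j.isLt⟩ := by
        rw [he_def]; unfold shiftIns; rw [if_neg h]
      rw [hej, hgt ⟨(j : ℕ) + 1, Nat.succ_lt_succ j.isLt⟩ (by simp; omega)]
      simp
  constructor
  · -- first component
    have h0 : (0 : ℕ) < n + 1 := Nat.succ_pos n
    rw [Sc_pos' βi 0 h0]
    have hinv0 : βi⁻¹ ⟨0, h0⟩ = ⟨i, by omega⟩ := by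
      rw [Equiv.Perm.inv_def, Equiv.symm_apply_eq]
      exact Fin.ext (heq ⟨i, by omega⟩ rfl).symm
    by_cases hi0 : i = 0
    · subst hi0
      have hLe : ¬ (Finset.univ.filter fun j : Fin (n + 1) =>
          j < βi⁻¹ ⟨0, h0⟩ ∧ (⟨0, h0⟩ : Fin (n + 1)) < βi j).Nonempty := by
        rw [Finset.not_nonempty_iff_eq_empty, Finset.filter_eq_empty_iff]
        intro j _
        rw [hinv0]
        exact fun h => absurd (Fin.lt_def.mp h.1) (Nat.not_lt_zero _)
      rw [dif_neg hLe]
      unfold Paper.tauS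
      rw [dif_neg (by omega)]
    · have hi1 : 1 ≤ i := Nat.one_le_iff_ne_zero.mpr hi0
      have him1 : i - 1 < n + 1 := by omega
      have hmem : (⟨i - 1, him1⟩ : Fin (n + 1)) ∈ Finset.univ.filter
          (fun j : Fin (n + 1) => j < βi⁻¹ ⟨0, h0⟩ ∧ (⟨0, h0⟩ : Fin (n + 1)) < βi j) := by
        rw [Finset.mem_filter]
        refine ⟨Finset.mem_univ _, ?_, ?_⟩
        · rw [hinv0]
          exact Fin.mk_lt_mk.mpr (by omega)
        · rw [Fin.lt_def]
          have h1 := hlt ⟨i - 1, him1⟩ (by simp; omega)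
          simp only [Fin.val_mk] at h1 ⊢
          omega
      have hL : (Finset.univ.filter (fun j : Fin (n + 1) =>
          j < βi⁻¹ ⟨0, h0⟩ ∧ (⟨0, h0⟩ : Fin (n + 1)) < βi j)).Nonempty := ⟨_, hmem⟩
      rw [dif_pos hL]
      have hmax : (Finset.univ.filter (fun j : Fin (n + 1) =>
          j < βi⁻¹ ⟨0, h0⟩ ∧ (⟨0, h0⟩ : Fin (n + 1)) < βi j)).max' hL = ⟨i - 1, him1⟩ := by
        apply le_antisymm
        · apply Finset.max'_le
          intro j hj
          rw [Finset.mem_filter, hinv0] at hj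
          have h2 := hj.2.1
          rw [Fin.lt_def] at h2
          rw [Fin.le_def]
          simp only [Fin.val_mk] at h2 ⊢
          omega
        · exact Finset.le_max' _ _ hmem
      rw [hmax]
      unfold Paper.tauS
      rw [dif_pos ⟨hi1, hi⟩]
      have h1 := hlt ⟨i - 1, him1⟩ (by simp; omega)
      simp only [Fin.val_mk] at h1
      have hb : (β ⟨i - 1, by omega⟩ : ℕ) < n := (β _).isLt
      omega
  · -- remaining components
    intro t
    by_cases ht : t < n
    · have ht' : t + 1 < n + 1 := by omega
      have hβp : β (β⁻¹ ⟨t, ht⟩) = ⟨t, ht⟩ := β.apply_symm_apply _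
      have hinvt : βi⁻¹ ⟨t + 1, ht'⟩ = e (β⁻¹ ⟨t, ht⟩) := by
        rw [Equiv.Perm.inv_def, Equiv.symm_apply_eq]
        apply Fin.ext
        have := he (β⁻¹ ⟨t, ht⟩)
        rw [hβp] at this
        simp only [Fin.val_mk] at this
        exact this.symm
      rw [Sc_pos' βi (t + 1) ht', Sc_pos' β t ht, hinvt]
      have himg : (Finset.univ.filter fun j : Fin (n + 1) =>
            j < e (β⁻¹ ⟨t, ht⟩) ∧ (⟨t + 1, ht'⟩ : Fin (n + 1)) < βi j)
          = (Finset.univ.filter fun j : Fin n =>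
            j < β⁻¹ ⟨t, ht⟩ ∧ (⟨t, ht⟩ : Fin n) < β j).image e := by
        ext j
        simp only [Finset.mem_image, Finset.mem_filter, Finset.mem_univ, true_and]
        constructor
        · rintro ⟨hj1, hj2⟩
          rw [Fin.lt_def] at hj2
          simp only [Fin.val_mk] at hj2
          have hji : (j : ℕ) ≠ i := by
            intro h
            rw [heq j h] at hj2
            omega
          by_cases hcase : (j : ℕ) < i
          · have hjn : (j : ℕ) < n := by omega
            refine ⟨⟨(j : ℕ), hjn⟩, ⟨?_, ?_⟩, ?_⟩
            · have hej : e ⟨(j : ℕ), hjn⟩ = j := by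
                rw [he_def]; unfold shiftIns
                rw [if_pos (by simpa using hcase)]
              rw [← hmono.lt_iff_lt, hej]
              exact hj1
            · rw [Fin.lt_def]
              have h3 := he ⟨(j : ℕ), hjn⟩
              have hej : e ⟨(j : ℕ), hjn⟩ = j := by
                rw [he_def]; unfold shiftIns
                rw [if_pos (by simpa using hcase)]
              rw [hej] at h3
              simp only [Fin.val_mk]
              omega
            · rw [he_def]; unfold shiftIns
              rw [if_pos (by simpa using hcase)]
          · have hij : i < (j : ℕ) := by omega
            have hjn : (j : ℕ) - 1 < n := by have := j.isLt; omega
            have hej : e ⟨(j : ℕ) - 1, hjn⟩ = j := by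
              rw [he_def]; unfold shiftIns
              rw [if_neg (by simp; omega)]
              exact Fin.ext (by simp; omega)
            refine ⟨⟨(j : ℕ) - 1, hjn⟩, ⟨?_, ?_⟩, hej⟩
            · rw [← hmono.lt_iff_lt, hej]
              exact hj1
            · rw [Fin.lt_def]
              have h3 := he ⟨(j : ℕ) - 1, hjn⟩
              rw [hej] at h3
              simp only [Fin.val_mk]
              omega
        · rintro ⟨j', ⟨h1, h2⟩, rfl⟩
          refine ⟨hmono h1, ?_⟩
          rw [Fin.lt_def] at h2 ⊢
          have h3 := he j'
          simp only [Fin.val_mk] at h2 ⊢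
          omega
      rw [himg]
      by_cases hL : (Finset.univ.filter fun j : Fin n =>
          j < β⁻¹ ⟨t, ht⟩ ∧ (⟨t, ht⟩ : Fin n) < β j).Nonempty
      · have hL' := hL.image e
        rw [dif_pos hL', dif_pos hL]
        have hmax : ((Finset.univ.filter fun j : Fin n =>
              j < β⁻¹ ⟨t, ht⟩ ∧ (⟨t, ht⟩ : Fin n) < β j).image e).max' hL'
            = e ((Finset.univ.filter fun j : Fin n =>
              j < β⁻¹ ⟨t, ht⟩ ∧ (⟨t, ht⟩ : Fin n) < β j).max' hL) := by
          apply le_antisymm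
          · apply Finset.max'_le
            intro j hj
            rw [Finset.mem_image] at hj
            obtain ⟨j', hj', rfl⟩ := hj
            exact hmono.monotone (Finset.le_max' _ _ hj')
          · exact Finset.le_max' _ _
              (Finset.mem_image_of_mem e (Finset.max'_mem _ hL))
        rw [hmax, he]
        have hb : (β ((Finset.univ.filter fun j : Fin n =>
            j < β⁻¹ ⟨t, ht⟩ ∧ (⟨t, ht⟩ : Fin n) < β j).max' hL) : ℕ) < n := (β _).isLt
        omega
      · rw [dif_neg hL, dif_neg (by simpa using hL)]
    · rw [Sc_neg' βi (t + 1) (by omega), Sc_neg' β t ht]
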